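/- Let a, b, c, p, q be integers with a, b, c nonzero and (p, q) ≠ (0, 0). If ζ is a root of unity satisfying a·ζ^p + b·ζ^q + c = 0, then the order of ζ divides 6·gcd(p, q). -/

import Mathlib

lemma root_integral (α : ℂ) (n : ℕ) (hn : 0 < n) (h : α ^ n = 1) : IsIntegral ℤ α := by
  refine ⟨Polynomial.X ^ n - Polynomial.C 1, Polynomial.monic_X_pow_sub_C 1 hn.ne', ?_⟩
  simp [h]

lemma key_trace (γ : ℂ) (n : ℕ) (hn : 0 < n) (hγn : γ ^ n = 1) (r : ℚ)
    (hr : γ + γ⁻¹ = (r:ℂ)) :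
    ∃ k : ℤ, (k:ℚ) = r ∧ -2 ≤ k ∧ k ≤ 2 ∧ γ^2 + 1 = (k:ℂ)*γ := by
  have hγ0 : γ ≠ 0 := by
    intro h; rw [h, zero_pow hn.ne'] at hγn; exact zero_ne_one hγn
  have habs : ‖γ‖ = 1 := by
    have h1 : ‖γ‖ ^ n = 1 := by
      rw [← norm_pow, hγn, norm_one]
    exact (pow_eq_one_iff_of_nonneg (norm_nonneg γ) hn.ne').mp h1
  -- integrality
  have hint : IsIntegral ℤ (γ + γ⁻¹) := by
    have h1 : IsIntegral ℤ γ := root_integral γ n hn hγn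
    have h2 : IsIntegral ℤ γ⁻¹ := by
      have hinv : γ⁻¹ = γ ^ (n - 1) := by
        refine (inv_eq_of_mul_eq_one_left ?_).symm.symm
        rw [← pow_succ, Nat.sub_add_cancel hn, hγn]
      rw [hinv]; exact h1.pow _
    exact h1.add h2
  rw [hr] at hint
  have h2 : IsIntegral ℤ r := by
    rw [show ((r:ℂ)) = algebraMap ℚ ℂ r from rfl] at hint
    exact (isIntegral_algebraMap_iff (algebraMap ℚ ℂ).injective).mp hint
  obtain ⟨k, hk⟩ := IsIntegrallyClosed.isIntegral_iff.mp h2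
  have hk' : (k:ℚ) = r := hk
  -- bound
  have hb : ‖((r:ℂ))‖ ≤ 2 := by
    rw [← hr]
    calc ‖γ + γ⁻¹‖ ≤ ‖γ‖ + ‖γ⁻¹‖ := norm_add_le _ _
    _ = 2 := by rw [norm_inv, habs]; norm_num
  have hkr : |(k:ℝ)| ≤ 2 := by
    rw [← hk'] at hb
    simpa using hb
  have hk1 : -2 ≤ k ∧ k ≤ 2 := by
    constructor <;> [exact_mod_cast neg_le_of_abs_le hkr; exact_mod_cast le_of_abs_le hkr]
  -- quadratic
  refine ⟨k, hk', hk1.1, hk1.2, ?_⟩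
  have hγγ : γ * γ⁻¹ = 1 := mul_inv_cancel₀ hγ0
  have hrk : γ + γ⁻¹ = (k:ℂ) := by rw [hr, ← hk']; push_cast; ring
  linear_combination γ * hrk - hγγ

lemma no_sqrt3 (a b : ℤ) (hb : b ≠ 0) (h : 4*a^2 = 3*b^2) : False := by
  have h3 : Irrational (Real.sqrt 3) := by
    have := (Nat.prime_three).irrational_sqrt
    simpa using this
  apply h3
  refine ⟨|(2*a : ℚ)/b|, ?_⟩
  have hx : ((|(2*a : ℚ)/b| : ℚ) : ℝ)^2 = 3 := by
    push_cast
    rw [abs_div]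
    field_simp
    push_cast [sq_abs]
    have h' : ((4*a^2 : ℤ) : ℝ) = ((3*b^2 : ℤ) : ℝ) := by rw [h]
    push_cast at h' ⊢
    linear_combination h'
  rw [← Real.sqrt_sq (by positivity : (0:ℝ) ≤ ((|(2*a : ℚ)/b| : ℚ) : ℝ)), hx]

lemma mann_core (a b c : ℤ) (ha : a ≠ 0) (hb : b ≠ 0) (hc : c ≠ 0) (α β : ℂ)
    (hα : ∃ n : ℕ, 0 < n ∧ α ^ n = 1) (hβ : ∃ n : ℕ, 0 < n ∧ β ^ n = 1)
    (heq : a * α + b * β + c = 0) : α ^ 6 = 1 := by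
  obtain ⟨n, hn, hαn⟩ := hα
  obtain ⟨m, hm, hβm⟩ := hβ
  have hα0 : α ≠ 0 := by intro h; rw [h, zero_pow hn.ne'] at hαn; exact zero_ne_one hαn
  have hβ0 : β ≠ 0 := by intro h; rw [h, zero_pow hm.ne'] at hβm; exact zero_ne_one hβm
  have haC : (a:ℂ) ≠ 0 := Int.cast_ne_zero.mpr ha
  have hbC : (b:ℂ) ≠ 0 := Int.cast_ne_zero.mpr hb
  have hcC : (c:ℂ) ≠ 0 := Int.cast_ne_zero.mpr hc
  have habsα : ‖α‖ = 1 := by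
    have h1 : ‖α‖ ^ n = 1 := by rw [← norm_pow, hαn, norm_one]
    exact (pow_eq_one_iff_of_nonneg (norm_nonneg α) hn.ne').mp h1
  have habsβ : ‖β‖ = 1 := by
    have h1 : ‖β‖ ^ m = 1 := by rw [← norm_pow, hβm, norm_one]
    exact (pow_eq_one_iff_of_nonneg (norm_nonneg β) hm.ne').mp h1
  have hconjα : (starRingEnd ℂ) α = α⁻¹ := (Complex.inv_eq_conj habsα).symm
  have hconjβ : (starRingEnd ℂ) β = β⁻¹ := (Complex.inv_eq_conj habsβ).symm
  have heq2 : (a:ℂ) * α⁻¹ + b * β⁻¹ + c = 0 := by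
    have := congrArg (starRingEnd ℂ) heq
    simpa [map_add, map_mul, hconjα, hconjβ] using this
  have hαα : α * α⁻¹ = 1 := mul_inv_cancel₀ hα0
  have hββ : β * β⁻¹ = 1 := mul_inv_cancel₀ hβ0
  -- trace of α is rational
  have ht : (a:ℂ) * c * (α + α⁻¹) = b^2 - a^2 - c^2 := by
    have h1 : (b:ℂ) * β = -((a:ℂ)*α + c) := by linear_combination heq
    have h2 : (b:ℂ) * β⁻¹ = -((a:ℂ)*α⁻¹ + c) := by linear_combination heq2
    have h3 : ((b:ℂ) * β) * ((b:ℂ) * β⁻¹) = b^2 := by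
      rw [show ((b:ℂ) * β) * ((b:ℂ) * β⁻¹) = (b:ℂ)^2 * (β * β⁻¹) by ring, hββ, mul_one]
    rw [h1, h2] at h3
    linear_combination h3 - (a:ℂ)^2 * hαα
  set r : ℚ := ((b:ℚ)^2 - (a:ℚ)^2 - (c:ℚ)^2) / ((a:ℚ) * (c:ℚ)) with hrdef
  have hr : α + α⁻¹ = (r:ℂ) := by
    rw [hrdef]
    push_cast
    rw [eq_div_iff (by exact mul_ne_zero haC hcC)]
    linear_combination ht
  obtain ⟨k, hk, hk1, hk2, hquad⟩ := key_trace α n hn hαn r hr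
  interval_cases k
  · -- k = -2 : α = -1
    have h1 : (α + 1)^2 = 0 := by push_cast at hquad; linear_combination hquad
    have h2 : α = -1 := by
      have h := pow_eq_zero_iff (n := 2) (by norm_num) |>.mp h1
      linear_combination h
    rw [h2]; norm_num
  · -- k = -1
    push_cast at hquad
    linear_combination (α - 1) * (α^3 + 1) * hquad
  · -- k = 0 : contradiction
    exfalso
    push_cast at hquad
    have hα2 : α^2 = -1 := by linear_combination hquad
    have hinvα : α⁻¹ = -α := inv_eq_of_mul_eq_one_right (by linear_combination -hα2)
    -- sum and difference equations
    have hsum : (b:ℂ) * (β + β⁻¹) + 2*c = 0 := by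
      rw [hinvα] at heq2
      linear_combination heq + heq2
    have hdiff : 2*(a:ℂ)*α + b*(β - β⁻¹) = 0 := by
      rw [hinvα] at heq2
      linear_combination heq - heq2
    set s : ℚ := -2*(c:ℚ)/(b:ℚ) with hsdef
    have hs : β + β⁻¹ = (s:ℂ) := by
      rw [hsdef]; push_cast
      rw [eq_div_iff hbC]
      linear_combination hsum
    obtain ⟨l, hl, hl1, hl2, hquadβ⟩ := key_trace β m hm hβm s hs
    have hls : β + β⁻¹ = (l:ℂ) := by rw [hs, ← hl]; push_cast; ring
    -- integer identity:  l^2 b^2 + 4 a^2 = 4 b^2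
    have e1 : 2*(b:ℂ)*β = (l:ℂ)*b - 2*a*α := by
      linear_combination (b:ℂ) * hls + hdiff
    have e2 : 2*(b:ℂ)*β⁻¹ = (l:ℂ)*b + 2*a*α := by
      linear_combination (b:ℂ) * hls - hdiff
    have e3 : (2*(b:ℂ)*β) * (2*(b:ℂ)*β⁻¹) = ((l:ℂ)*b - 2*a*α) * ((l:ℂ)*b + 2*a*α) := by
      rw [e1, e2]
    have e4 : ((l:ℤ)^2 * b^2 + 4*a^2 : ℤ) = 4 * b^2 := by
      have e5 : ((l:ℂ)^2 * b^2 + 4*a^2 : ℂ) = 4 * b^2 := by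
        linear_combination -e3 + 4*(b:ℂ)^2*hββ + 4*(a:ℂ)^2*hα2
      exact_mod_cast e5
    -- l b = -2 c
    have e6 : (l * b : ℤ) = -2*c := by
      have h : ((l:ℂ) * b : ℂ) = -2*c := by
        linear_combination hsum - (b:ℂ)*hls
      exact_mod_cast h
    interval_cases l <;> norm_num at e4 e6 <;>
      first
        | exact ha e4
        | exact hc (by omega)
        | exact no_sqrt3 a b hb (by linarith)
  · -- k = 1
    push_cast at hquad
    linear_combination (α + 1) * (α^3 - 1) * hquad
  · -- k = 2 : α = 1
    have h1 : (α - 1)^2 = 0 := by push_cast at hquad; linear_combination hquad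
    have h2 : α = 1 := by
      have := pow_eq_zero_iff (n := 2) (by norm_num) |>.mp h1
      have : α - 1 = 0 := this
      linear_combination this
    rw [h2]; norm_num

theorem stmt_3 (a b c : ℤ) (p q : ℤ) (ha : a ≠ 0) (hb : b ≠ 0) (hc : c ≠ 0)
    (hpq : (p, q) ≠ (0, 0)) (ζ : ℂ) (hζ : ∃ n : ℕ, 0 < n ∧ ζ ^ n = 1)
    (heq : a * ζ ^ p + b * ζ ^ q + c = 0) :
    (orderOf ζ : ℤ) ∣ 6 * (Int.gcd p q : ℤ) := by
  obtain ⟨n, hn, hζn⟩ := hζ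
  have hζ0 : ζ ≠ 0 := by
    intro h; rw [h, zero_pow hn.ne'] at hζn; exact zero_ne_one hζn
  have hru : ∀ t : ℤ, ∃ k : ℕ, 0 < k ∧ (ζ ^ t) ^ k = 1 := by
    intro t
    exact ⟨n, hn, by rw [← zpow_natCast (ζ ^ t), ← zpow_mul, mul_comm, zpow_mul,
      zpow_natCast, hζn, one_zpow]⟩
  have h6p : ζ ^ (6 * p) = 1 := by
    have h := mann_core a b c ha hb hc (ζ ^ p) (ζ ^ q) (hru p) (hru q) heq
    rw [mul_comm, zpow_mul, show ((6:ℤ)) = ((6:ℕ):ℤ) by norm_num, zpow_natCast]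
    exact h
  have h6q : ζ ^ (6 * q) = 1 := by
    have heq' : (b:ℂ) * ζ ^ q + a * ζ ^ p + c = 0 := by linear_combination heq
    have h := mann_core b a c hb ha hc (ζ ^ q) (ζ ^ p) (hru q) (hru p) heq'
    rw [mul_comm, zpow_mul, show ((6:ℤ)) = ((6:ℕ):ℤ) by norm_num, zpow_natCast]
    exact h
  -- move to units
  set u : ℂˣ := Units.mk0 ζ hζ0 with hu
  have hord : orderOf ζ = orderOf u := (orderOf_units (y := u))
  have hdvd : ∀ t : ℤ, ζ ^ t = 1 → (orderOf ζ : ℤ) ∣ t := by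
    intro t ht
    rw [hord]
    rw [orderOf_dvd_iff_zpow_eq_one]
    ext
    push_cast [Units.val_zpow_eq_zpow_val]
    exact ht
  have d1 := hdvd _ h6p
  have d2 := hdvd _ h6q
  have d3 : (orderOf ζ : ℤ) ∣ (Int.gcd (6*p) (6*q) : ℤ) := Int.dvd_coe_gcd d1 d2
  have : (Int.gcd (6*p) (6*q) : ℤ) = 6 * (Int.gcd p q : ℤ) := by
    rw [Int.gcd_mul_left]
    push_cast
    norm_num
  rwa [this] at d3
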